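/- Let K be a finite index set, for each k let ι k be a finite type, and let A k : Matrix (ι k) (ι k) ℝ be a family of positive semidefinite matrices. Then for every σ : ℝ with σ ≠ 0, the matrix (⊗ₖ A k) + σ² • 1 is positive definite; in particular it is invertible. -/

import Mathlib

open Matrix

/-- The Kronecker-type product of a finite family of square matrices:
the matrix indexed by `Π k, ι k` whose `(i, j)` entry is `∏ k, A k (i k) (j k)`. -/
noncomputable def kronPi {K : Type*} [Fintype K] [DecidableEq K]
    {ι : K → Type*} [∀ k, Fintype (ι k)]
    (A : ∀ k, Matrix (ι k) (ι k) ℝ) : Matrix (∀ k, ι k) (∀ k, ι k) ℝ :=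
  Matrix.of fun i j => ∏ k, A k (i k) (j k)

open scoped MatrixOrder in
lemma posSemidef_iff_eq_transpose_mul_self {n : Type*} [Fintype n] [DecidableEq n]
    {A : Matrix n n ℝ} : A.PosSemidef ↔ ∃ B : Matrix n n ℝ, A = Bᴴ * B :=
  ⟨fun h => by
    obtain ⟨B, hB⟩ := CStarAlgebra.nonneg_iff_eq_star_mul_self.mp h.nonneg
    exact ⟨B, hB⟩, fun ⟨B, h⟩ => h ▸ posSemidef_conjTranspose_mul_self B⟩

lemma kronPi_posSemidef {K : Type*} [Fintype K] [DecidableEq K]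
    {ι : K → Type*} [∀ k, Fintype (ι k)] [∀ k, DecidableEq (ι k)]
    (A : ∀ k, Matrix (ι k) (ι k) ℝ) (hA : ∀ k, (A k).PosSemidef) :
    (kronPi A).PosSemidef := by
  choose B hB using fun k => posSemidef_iff_eq_transpose_mul_self.mp (hA k)
  rw [posSemidef_iff_eq_transpose_mul_self]
  refine ⟨kronPi B, ?_⟩
  ext i j
  simp only [kronPi, Matrix.of_apply, mul_apply, conjTranspose_apply, star_trivial]
  calc ∏ k, A k (i k) (j k)
      = ∏ k, ∑ l, B k l (i k) * B k l (j k) := by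
        refine Finset.prod_congr rfl fun k _ => ?_
        rw [hB k]; simp [mul_apply]
    _ = ∑ l : ∀ k, ι k, ∏ k, (B k (l k) (i k) * B k (l k) (j k)) := by
        rw [Finset.prod_univ_sum]
        exact Fintype.sum_equiv (Equiv.refl _) _ _ (fun _ => rfl)
    _ = ∑ l : ∀ k, ι k, (∏ k, B k (l k) (i k)) * ∏ k, B k (l k) (j k) := by
        simp [Finset.prod_mul_distrib]

/-- If the `A k` are positive semidefinite and `σ ≠ 0`, then `(⊗ₖ A k) + σ² • 1` is
positive definite; in particular it is invertible. -/
theorem kronPi_add_noise_posDef {K : Type*} [Fintype K] [DecidableEq K]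
    {ι : K → Type*} [∀ k, Fintype (ι k)] [∀ k, DecidableEq (ι k)]
    (A : ∀ k, Matrix (ι k) (ι k) ℝ) (hA : ∀ k, (A k).PosSemidef)
    (σ : ℝ) (hσ : σ ≠ 0) :
    (kronPi A + σ ^ 2 • 1).PosDef ∧ IsUnit (kronPi A + σ ^ 2 • 1).det := by
  have h1 : (σ ^ 2 • (1 : Matrix (∀ k, ι k) (∀ k, ι k) ℝ)).PosDef := by
    refine posDef_iff_dotProduct_mulVec.mpr ⟨by unfold Matrix.IsHermitian; simp, fun x hx => ?_⟩
    have : star x ⬝ᵥ (σ ^ 2 • (1 : Matrix (∀ k, ι k) (∀ k, ι k) ℝ)) *ᵥ x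
        = σ ^ 2 * (x ⬝ᵥ x) := by
      simp [smul_mulVec, dotProduct_smul, star_trivial]
    rw [this]
    have hxx : 0 < x ⬝ᵥ x := by
      have := Matrix.dotProduct_star_self_pos_iff (v := x)
      simpa using this.mpr hx
    positivity
  have h := Matrix.PosDef.posSemidef_add (kronPi_posSemidef A hA) h1
  exact ⟨h, h.det_pos.ne'.isUnit⟩
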